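/- Let 1 < p < ∞ and d ≥ 1. There exists a constant C ≥ 1 depending only on p such that for all vectors a, b ∈ ℝ^d (with a ≠ 0 or interpreting |a|^{p-2}a·b as 0 when a = 0): C⁻¹ |b|² (|a|+|b|)^{p-2} ≤ |a+b|^p - |a|^p - p|a|^{p-2} a·b ≤ C |b|² (|a|+|b|)^{p-2}. -/

import Mathlib

open Real
open scoped RealInnerProductSpace

open MeasureTheory intervalIntegral Set

lemma aux_sq_rpow (x e : ℝ) (hx : 0 ≤ x) : (x^2 : ℝ) ^ e = x ^ (2*e) := by
  rw [← Real.rpow_natCast x 2, ← Real.rpow_mul hx]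
  norm_num

noncomputable def kap1 (p : ℝ) : ℝ := p * min 1 (p-1)
noncomputable def kap2 (p : ℝ) : ℝ := p * max 1 (p-1)


lemma kap1_posx {p : ℝ} (hp : 1 < p) : 0 < kap1 p :=
  mul_pos (by linarith) (lt_min one_pos (by linarith))

lemma kap2_posx {p : ℝ} (hp : 1 < p) : 0 < kap2 p :=
  mul_pos (by linarith) (lt_of_lt_of_le one_pos (le_max_left _ _))

section DERIV
variable {p α β B : ℝ} (hp : 1 < p) (hβ : 0 < β) (hB : B^2 < α^2 * β^2)

private noncomputable def qf (α β B : ℝ) : ℝ → ℝ := fun t => α^2 + 2*B*t + β^2*t^2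
private noncomputable def Lf (β B : ℝ) : ℝ → ℝ := fun t => B + β^2*t
private noncomputable def ff (p α β B : ℝ) : ℝ → ℝ := fun t => qf α β B t ^ (p/2)
private noncomputable def f1 (p α β B : ℝ) : ℝ → ℝ :=
  fun t => p * qf α β B t ^ ((p-2)/2) * Lf β B t
private noncomputable def f2 (p α β B : ℝ) : ℝ → ℝ :=
  fun t => p * ((p-2) * qf α β B t ^ ((p-2)/2-1) * (Lf β B t)^2
    + qf α β B t ^ ((p-2)/2) * β^2)
private noncomputable def hf (p α β B : ℝ) : ℝ → ℝ := fun t => qf α β B t ^ ((p-2)/2)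

include hβ hB in
lemma q_pos (t : ℝ) : 0 < qf α β B t := by
  unfold qf
  nlinarith [sq_nonneg (β^2*t + B), mul_pos hβ hβ, sq_nonneg β]

lemma q_cont : Continuous (qf α β B) := by unfold qf; continuity

lemma q_deriv (t : ℝ) : HasDerivAt (qf α β B) (2 * Lf β B t) t := by
  have h : HasDerivAt (qf α β B) (0 + 2*B*1 + β^2*((2:ℕ)*t^1)) t :=
    ((hasDerivAt_const t (α^2)).add ((hasDerivAt_id t).const_mul (2*B))).add
      ((hasDerivAt_pow 2 t).const_mul (β^2))
  convert h using 1
  unfold Lf; push_cast; ring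

include hβ hB in
lemma f_deriv (t : ℝ) : HasDerivAt (ff p α β B) (f1 p α β B t) t := by
  have h1 : HasDerivAt (fun x : ℝ => x ^ (p/2)) ((p/2) * qf α β B t ^ (p/2 - 1)) (qf α β B t) :=
    Real.hasDerivAt_rpow_const (Or.inl (q_pos hβ hB t).ne')
  have h2 := h1.comp t (q_deriv t)
  refine h2.congr_deriv ?_
  unfold f1
  rw [show p/2 - 1 = (p-2)/2 by ring]
  ring

include hβ hB in
lemma f1_deriv (t : ℝ) : HasDerivAt (f1 p α β B) (f2 p α β B t) t := by
  have h1 : HasDerivAt (fun x : ℝ => x ^ ((p-2)/2))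
      (((p-2)/2) * qf α β B t ^ ((p-2)/2 - 1)) (qf α β B t) :=
    Real.hasDerivAt_rpow_const (Or.inl (q_pos hβ hB t).ne')
  have h2 := h1.comp t (q_deriv t)
  have h3 : HasDerivAt (Lf β B) (β^2) t := by
    unfold Lf
    exact ((hasDerivAt_const t B).add ((hasDerivAt_id t).const_mul (β^2))).congr_deriv (by ring)
  have h4 := (h2.mul h3).const_mul p
  simp only [Function.comp] at h4
  have hfe : f1 p α β B = fun y => p * (qf α β B y ^ ((p-2)/2) * Lf β B y) := by
    unfold f1; funext s; ring
  rw [hfe]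
  exact h4.congr_deriv (by unfold f2; ring)

include hβ hB in
lemma h_cont : Continuous (hf p α β B) :=
  (q_cont).rpow_const (fun t => Or.inl (q_pos hβ hB t).ne')

include hβ hB in
lemma f1_cont : Continuous (f1 p α β B) := by
  unfold f1
  exact (continuous_const.mul (h_cont hβ hB)).mul (by unfold Lf; continuity)

include hβ hB in
lemma f2_cont : Continuous (f2 p α β B) := by
  unfold f2
  have c1 : Continuous (fun t => qf α β B t ^ ((p-2)/2-1)) :=
    (q_cont).rpow_const (fun t => Or.inl (q_pos hβ hB t).ne')
  have c2 : Continuous (Lf β B) := by unfold Lf; continuity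
  exact continuous_const.mul
    (((continuous_const.mul c1).mul (c2.pow 2)).add ((h_cont hβ hB).mul continuous_const))

include hp hβ hB in
lemma f2_bounds (t : ℝ) :
    kap1 p * β^2 * hf p α β B t ≤ f2 p α β B t ∧
    f2 p α β B t ≤ kap2 p * β^2 * hf p α β B t := by
  have hq := q_pos hβ hB t
  have hX : (0:ℝ) ≤ qf α β B t ^ ((p-2)/2-1) := Real.rpow_nonneg hq.le _
  have hqe : qf α β B t ^ ((p-2)/2) = qf α β B t ^ ((p-2)/2-1) * qf α β B t := by
    rw [← Real.rpow_add_one hq.ne' ((p-2)/2-1)]; ring_nf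
  have hL2 : (Lf β B t)^2 = β^2 * qf α β B t - (α^2*β^2 - B^2) := by
    unfold Lf qf; ring
  have hLb : (Lf β B t)^2 ≤ β^2 * qf α β B t := by nlinarith [hB.le]
  have hL0 : (0:ℝ) ≤ (Lf β B t)^2 := sq_nonneg _
  have hp0 : (0:ℝ) < p := by linarith
  unfold f2 hf kap1 kap2
  rw [hqe]
  rcases le_total 2 p with h2 | h2
  · rw [min_eq_left (by linarith), max_eq_right (by linarith)]
    constructor
    · nlinarith [mul_nonneg (mul_nonneg (sub_nonneg.2 h2) hX) hL0]
    · nlinarith [mul_nonneg hX (sub_nonneg.2 hLb),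
        mul_le_mul_of_nonneg_left hLb (mul_nonneg (sub_nonneg.2 h2) hX)]
  · rw [min_eq_right (by linarith), max_eq_left (by linarith)]
    constructor
    · nlinarith [mul_le_mul_of_nonneg_left hLb (mul_nonneg (sub_nonneg.2 h2) hX)]
    · nlinarith [mul_nonneg (mul_nonneg (sub_nonneg.2 h2) hX) hL0]
end DERIV

section INT
variable {p α β B : ℝ} (hp : 1 < p) (hβ : 0 < β) (hB : B^2 < α^2 * β^2)

private noncomputable def Hf (p α β B : ℝ) : ℝ → ℝ :=
  fun s => ∫ u in (0:ℝ)..s, hf p α β B u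

include hβ hB in
lemma h_int (a b : ℝ) : IntervalIntegrable (hf p α β B) volume a b :=
  (h_cont hβ hB).intervalIntegrable a b

include hβ hB in
lemma H_add (s t : ℝ) : Hf p α β B s + ∫ u in s..t, hf p α β B u = Hf p α β B t :=
  integral_add_adjacent_intervals (h_int hβ hB 0 s) (h_int hβ hB s t)

include hβ hB in
lemma H_mono : Monotone (Hf p α β B) := by
  intro s t hst
  have h1 := H_add (p := p) (α := α) hβ hB s t
  have h2 : 0 ≤ ∫ u in s..t, hf p α β B u :=
    integral_nonneg hst (fun u _ => Real.rpow_nonneg (q_pos hβ hB u).le _)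
  linarith

include hβ hB in
lemma H_nonneg {s : ℝ} (hs : 0 ≤ s) : 0 ≤ Hf p α β B s :=
  integral_nonneg hs (fun u _ => Real.rpow_nonneg (q_pos hβ hB u).le _)

include hβ hB in
lemma H_int (a b : ℝ) : IntervalIntegrable (Hf p α β B) volume a b :=
  ((H_mono hβ hB).monotoneOn _).intervalIntegrable

include hp hβ hB in
lemma key1 {s : ℝ} (hs : s ∈ Icc (0:ℝ) 1) :
    kap1 p * β^2 * Hf p α β B s ≤ f1 p α β B s - f1 p α β B 0 ∧
    f1 p α β B s - f1 p α β B 0 ≤ kap2 p * β^2 * Hf p α β B s := by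
  have hfi : IntervalIntegrable (f2 p α β B) volume 0 s :=
    (f2_cont hβ hB).intervalIntegrable _ _
  have e1 : ∫ u in (0:ℝ)..s, f2 p α β B u = f1 p α β B s - f1 p α β B 0 :=
    integral_eq_sub_of_hasDerivAt (fun u _ => f1_deriv hβ hB u) hfi
  constructor
  · calc kap1 p * β^2 * Hf p α β B s = ∫ u in (0:ℝ)..s, kap1 p * β^2 * hf p α β B u := by
          rw [Hf, intervalIntegral.integral_const_mul]
      _ ≤ ∫ u in (0:ℝ)..s, f2 p α β B u :=
          integral_mono_on hs.1 ((h_int hβ hB 0 s).const_mul _) hfi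
            (fun u _ => (f2_bounds hp hβ hB u).1)
      _ = _ := e1
  · calc f1 p α β B s - f1 p α β B 0 = ∫ u in (0:ℝ)..s, f2 p α β B u := e1.symm
      _ ≤ ∫ u in (0:ℝ)..s, kap2 p * β^2 * hf p α β B u :=
          integral_mono_on hs.1 hfi ((h_int hβ hB 0 s).const_mul _)
            (fun u _ => (f2_bounds hp hβ hB u).2)
      _ = kap2 p * β^2 * Hf p α β B s := by rw [Hf, intervalIntegral.integral_const_mul]

include hp hβ hB in
lemma main_bounds :
    kap1 p * β^2 * (1/2 * Hf p α β B (1/2)) ≤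
      ff p α β B 1 - ff p α β B 0 - f1 p α β B 0 ∧
    ff p α β B 1 - ff p α β B 0 - f1 p α β B 0 ≤ kap2 p * β^2 * Hf p α β B 1 := by
  have hint_f1 : IntervalIntegrable (fun s => f1 p α β B s - f1 p α β B 0) volume 0 1 :=
    ((f1_cont hβ hB).sub continuous_const).intervalIntegrable _ _
  have hder : ∀ s ∈ uIcc (0:ℝ) 1,
      HasDerivAt (fun s => ff p α β B s - f1 p α β B 0 * s)
        (f1 p α β B s - f1 p α β B 0) s := by
    intro s _
    have h1 := (f_deriv hβ hB s (p := p)).sub ((hasDerivAt_id s).const_mul (f1 p α β B 0))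
    exact h1.congr_deriv (by ring)
  have eqF : ∫ s in (0:ℝ)..1, (f1 p α β B s - f1 p α β B 0) =
      ff p α β B 1 - ff p α β B 0 - f1 p α β B 0 := by
    rw [integral_eq_sub_of_hasDerivAt hder hint_f1]; ring
  have hk1 : 0 ≤ kap1 p * β^2 := by
    have := kap1_posx hp; positivity
  have hk2 : 0 ≤ kap2 p * β^2 := by
    have := kap2_posx hp; positivity
  constructor
  · have I1 : ∫ s in (0:ℝ)..1, kap1 p * β^2 * Hf p α β B s ≤
        ∫ s in (0:ℝ)..1, (f1 p α β B s - f1 p α β B 0) :=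
      integral_mono_on (by norm_num) ((H_int hβ hB 0 1).const_mul _) hint_f1
        (fun s hs => (key1 hp hβ hB hs).1)
    rw [intervalIntegral.integral_const_mul] at I1
    have I3 := H_add (p := p) (α := α) hβ hB (1/2) 1
    have I4 : (1/2 : ℝ) * Hf p α β B (1/2) ≤ ∫ s in (1/2:ℝ)..1, Hf p α β B s := by
      have : ∫ s in (1/2:ℝ)..1, Hf p α β B (1/2) ≤ ∫ s in (1/2:ℝ)..1, Hf p α β B s :=
        integral_mono_on (by norm_num) intervalIntegrable_const (H_int hβ hB _ _)
          (fun s hs => H_mono hβ hB hs.1)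
      rw [intervalIntegral.integral_const, smul_eq_mul] at this
      linarith
    have I5 : ∫ s in (0:ℝ)..(1/2), (0:ℝ) ≤ ∫ s in (0:ℝ)..(1/2), Hf p α β B s :=
      integral_mono_on (by norm_num) intervalIntegrable_const (H_int hβ hB _ _)
        (fun s hs => H_nonneg hβ hB hs.1)
    have I6 : (∫ s in (0:ℝ)..(1/2), Hf p α β B s) + ∫ s in (1/2:ℝ)..1, Hf p α β B s
        = ∫ s in (0:ℝ)..1, Hf p α β B s :=
      integral_add_adjacent_intervals (H_int hβ hB _ _) (H_int hβ hB _ _)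
    simp only [intervalIntegral.integral_zero] at I5
    have I7 : 1/2 * Hf p α β B (1/2) ≤ ∫ s in (0:ℝ)..1, Hf p α β B s := by linarith
    calc kap1 p * β^2 * (1/2 * Hf p α β B (1/2)) ≤
        kap1 p * β^2 * ∫ s in (0:ℝ)..1, Hf p α β B s :=
          mul_le_mul_of_nonneg_left I7 hk1
      _ ≤ ∫ s in (0:ℝ)..1, (f1 p α β B s - f1 p α β B 0) := I1
      _ = _ := eqF
  · have I1 : ∫ s in (0:ℝ)..1, (f1 p α β B s - f1 p α β B 0) ≤
        ∫ s in (0:ℝ)..1, kap2 p * β^2 * Hf p α β B s :=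
      integral_mono_on (by norm_num) hint_f1 ((H_int hβ hB 0 1).const_mul _)
        (fun s hs => (key1 hp hβ hB hs).2)
    rw [intervalIntegral.integral_const_mul] at I1
    have I2 : ∫ s in (0:ℝ)..1, Hf p α β B s ≤ Hf p α β B 1 := by
      have : ∫ s in (0:ℝ)..1, Hf p α β B s ≤ ∫ s in (0:ℝ)..1, Hf p α β B 1 :=
        integral_mono_on (by norm_num) (H_int hβ hB _ _) intervalIntegrable_const
          (fun s hs => H_mono hβ hB hs.2)
      simpa using this
    calc ff p α β B 1 - ff p α β B 0 - f1 p α β B 0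
        = ∫ s in (0:ℝ)..1, (f1 p α β B s - f1 p α β B 0) := eqF.symm
      _ ≤ kap2 p * β^2 * ∫ s in (0:ℝ)..1, Hf p α β B s := I1
      _ ≤ kap2 p * β^2 * Hf p α β B 1 := mul_le_mul_of_nonneg_left I2 hk2

end INT

lemma div_rpow_eq (S c r : ℝ) (hS : 0 ≤ S) (hc : 0 < c) : (S/c)^r = c^(-r) * S^r := by
  rw [Real.div_rpow hS hc.le, Real.rpow_neg hc.le, div_eq_mul_inv, mul_comm]

section EST
variable {p α β B : ℝ} (hp : 1 < p) (hα : 0 < α) (hβ : 0 < β) (hB : B^2 < α^2 * β^2)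

include hp hα hβ hB in
lemma E_low : min (1/8 * (10:ℝ)^(2-p)) (1/2) * (α+β)^(p-2) ≤ Hf p α β B (1/2) := by
  have hS : (0:ℝ) < α + β := by linarith
  have hSr : (0:ℝ) ≤ (α+β)^(p-2) := Real.rpow_nonneg hS.le _
  have hBlow : -(α*β) < B := by nlinarith [sq_nonneg (B + α*β), mul_pos hα hβ]
  have hBup : B < α*β := by nlinarith [sq_nonneg (B - α*β), mul_pos hα hβ]
  have hconv : ((α+β)/10)^(p-2) = (10:ℝ)^(2-p) * (α+β)^(p-2) := by
    rw [div_rpow_eq _ _ _ hS.le (by norm_num), show -(p-2) = 2-p by ring]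
  rcases le_total 2 p with h2 | h2
  · have he0 : (0:ℝ) ≤ (p-2)/2 := by linarith
    rcases le_total β (4*α) with hc | hc
    · -- use [0, 1/8]
      have hpt : ∀ u ∈ Icc (0:ℝ) (1/8), ((α+β)/10)^(p-2) ≤ hf p α β B u := by
        intro u hu
        have hb : β*u ≤ β*(1/8) := mul_le_mul_of_nonneg_left hu.2 hβ.le
        have h1 : (α+β)/10 ≤ α - β*u := by linarith
        have h2' : ((α+β)/10)^2 ≤ (α - β*u)^2 := pow_le_pow_left₀ (by positivity) h1 2
        have h3 : (α - β*u)^2 ≤ qf α β B u := by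
          unfold qf
          nlinarith [mul_nonneg hu.1 (by linarith : (0:ℝ) ≤ B + α*β)]
        have h4 : (((α+β)/10)^2)^((p-2)/2) ≤ qf α β B u ^ ((p-2)/2) :=
          Real.rpow_le_rpow (by positivity) (le_trans h2' h3) he0
        calc ((α+β)/10)^(p-2) = (((α+β)/10)^2)^((p-2)/2) := by
              rw [aux_sq_rpow _ _ (by positivity)]; congr 1; ring
          _ ≤ _ := h4
      have hint : ∫ u in (0:ℝ)..(1/8), ((α+β)/10)^(p-2) ≤
          ∫ u in (0:ℝ)..(1/8), hf p α β B u :=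
        integral_mono_on (by norm_num) intervalIntegrable_const (h_int hβ hB _ _) hpt
      rw [intervalIntegral.integral_const, smul_eq_mul] at hint
      have h18 : (∫ u in (0:ℝ)..(1/8), hf p α β B u) = Hf p α β B (1/8) := rfl
      have hmono := H_mono (p := p) (α := α) (B := B) hβ hB (by norm_num : (1/8:ℝ) ≤ 1/2)
      calc min (1/8 * (10:ℝ)^(2-p)) (1/2) * (α+β)^(p-2)
          ≤ 1/8*(10:ℝ)^(2-p) * (α+β)^(p-2) :=
            mul_le_mul_of_nonneg_right (min_le_left _ _) hSr
        _ = (1/8 - 0) * ((α+β)/10)^(p-2) := by rw [hconv]; ring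
        _ ≤ Hf p α β B (1/8) := by rw [← h18]; exact hint
        _ ≤ Hf p α β B (1/2) := hmono
    · -- use [3/8, 1/2]
      have hpt : ∀ u ∈ Icc (3/8:ℝ) (1/2), ((α+β)/10)^(p-2) ≤ hf p α β B u := by
        intro u hu
        have hb : β*(3/8) ≤ β*u := mul_le_mul_of_nonneg_left hu.1 hβ.le
        have h1 : (α+β)/10 ≤ β*u - α := by linarith
        have h2' : ((α+β)/10)^2 ≤ (β*u - α)^2 := pow_le_pow_left₀ (by positivity) h1 2
        have h3 : (β*u - α)^2 ≤ qf α β B u := by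
          unfold qf
          nlinarith [mul_nonneg (by linarith [hu.1] : (0:ℝ) ≤ u)
            (by linarith : (0:ℝ) ≤ B + α*β)]
        have h4 : (((α+β)/10)^2)^((p-2)/2) ≤ qf α β B u ^ ((p-2)/2) :=
          Real.rpow_le_rpow (by positivity) (le_trans h2' h3) he0
        calc ((α+β)/10)^(p-2) = (((α+β)/10)^2)^((p-2)/2) := by
              rw [aux_sq_rpow _ _ (by positivity)]; congr 1; ring
          _ ≤ _ := h4
      have hint : ∫ u in (3/8:ℝ)..(1/2), ((α+β)/10)^(p-2) ≤
          ∫ u in (3/8:ℝ)..(1/2), hf p α β B u :=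
        integral_mono_on (by norm_num) intervalIntegrable_const (h_int hβ hB _ _) hpt
      rw [intervalIntegral.integral_const, smul_eq_mul] at hint
      have hadd := H_add (p := p) (α := α) hβ hB (3/8) (1/2)
      have hnn := H_nonneg (p := p) (α := α) hβ hB (by norm_num : (0:ℝ) ≤ 3/8)
      calc min (1/8 * (10:ℝ)^(2-p)) (1/2) * (α+β)^(p-2)
          ≤ 1/8*(10:ℝ)^(2-p) * (α+β)^(p-2) :=
            mul_le_mul_of_nonneg_right (min_le_left _ _) hSr
        _ = (1/2 - 3/8) * ((α+β)/10)^(p-2) := by rw [hconv]; ring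
        _ ≤ ∫ u in (3/8:ℝ)..(1/2), hf p α β B u := hint
        _ ≤ Hf p α β B (1/2) := by linarith
  · have he0 : (p-2)/2 ≤ 0 := by linarith
    have hpt : ∀ u ∈ Icc (0:ℝ) (1/2), (α+β)^(p-2) ≤ hf p α β B u := by
      intro u hu
      have hb : β*u ≤ β*1 := mul_le_mul_of_nonneg_left (by linarith [hu.2]) hβ.le
      have h1 : α + β*u ≤ α+β := by linarith
      have h2' : (α + β*u)^2 ≤ (α+β)^2 :=
        pow_le_pow_left₀ (by nlinarith [mul_nonneg hβ.le hu.1]) h1 2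
      have h3 : qf α β B u ≤ (α + β*u)^2 := by
        unfold qf
        nlinarith [mul_nonneg hu.1 (by linarith : (0:ℝ) ≤ α*β - B)]
      have h4 : qf α β B u ^ ((p-2)/2) ≥ ((α+β)^2)^((p-2)/2) :=
        Real.rpow_le_rpow_of_nonpos (q_pos hβ hB u) (le_trans h3 h2') he0
      calc (α+β)^(p-2) = ((α+β)^2)^((p-2)/2) := by
            rw [aux_sq_rpow _ _ hS.le]; congr 1; ring
        _ ≤ _ := h4
    have hint : ∫ u in (0:ℝ)..(1/2), (α+β)^(p-2) ≤
        ∫ u in (0:ℝ)..(1/2), hf p α β B u :=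
      integral_mono_on (by norm_num) intervalIntegrable_const (h_int hβ hB _ _) hpt
    rw [intervalIntegral.integral_const, smul_eq_mul] at hint
    calc min (1/8 * (10:ℝ)^(2-p)) (1/2) * (α+β)^(p-2)
        ≤ 1/2 * (α+β)^(p-2) := mul_le_mul_of_nonneg_right (min_le_right _ _) hSr
      _ ≤ Hf p α β B (1/2) := by
          have : (∫ u in (0:ℝ)..(1/2), hf p α β B u) = Hf p α β B (1/2) := rfl
          linarith
end EST

section EST2
variable {p α β B : ℝ} (hp : 1 < p) (hα : 0 < α) (hβ : 0 < β) (hB : B^2 < α^2 * β^2)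

include hp hα hβ hB in
lemma E_up_line (h2 : p ≤ 2) (hc : α ≤ 2*β) :
    Hf p α β B 1 ≤ (3:ℝ)^(2-p) * (5/(p-1)) * (α+β)^(p-2) := by
  have hS : (0:ℝ) < α + β := by linarith
  have hp1 : (0:ℝ) < p - 1 := by linarith
  have hBlow : -(α*β) < B := by nlinarith [sq_nonneg (B + α*β), mul_pos hα hβ]
  have hBup : B < α*β := by nlinarith [sq_nonneg (B - α*β), mul_pos hα hβ]
  set t0 : ℝ := -B/β^2 with ht0_def
  set m : ℝ := min 1 (max 0 t0) with hm_def
  have hm0 : 0 ≤ m := le_min (by norm_num) (le_max_left _ _)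
  have hm1 : m ≤ 1 := min_le_left _ _
  have hline : ∀ u : ℝ, β^2*(u - t0)^2 ≤ qf α β B u := by
    intro u
    have e1 : β^2*(u - t0)^2 = β^2*u^2 + 2*B*u + B^2/β^2 := by
      rw [ht0_def]; field_simp; ring
    have e2 : B^2/β^2 ≤ α^2 := by
      rw [div_le_iff₀ (by positivity)]; nlinarith [hB.le]
    unfold qf; rw [e1]; linarith
  have ht0u : t0 ≤ 2 := by
    rw [ht0_def, div_le_iff₀ (by positivity : (0:ℝ) < β^2)]; nlinarith
  have ht0l : -2 ≤ t0 := by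
    rw [ht0_def, le_div_iff₀ (by positivity : (0:ℝ) < β^2)]; nlinarith
  have hae : ∀ᵐ u : ℝ ∂volume, u ≠ t0 := by
    rw [MeasureTheory.ae_iff]
    have h : {u : ℝ | ¬ u ≠ t0} = {t0} := by ext u; simp
    rw [h]; exact Real.volume_singleton
  have hbeta : (0:ℝ) ≤ (β^2)^((p-2)/2) := Real.rpow_nonneg (by positivity) _
  -- pointwise comparison off t0
  have hcmp_pt : ∀ u : ℝ, u ≠ t0 →
      hf p α β B u ≤ (β^2)^((p-2)/2) * ((u - t0)^2)^((p-2)/2) := by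
    intro u hne
    have hq := q_pos (α := α) (B := B) hβ hB u
    have hpos2 : (0:ℝ) < β^2*(u - t0)^2 := by
      have h5 : u - t0 ≠ 0 := sub_ne_zero.2 hne
      positivity
    have h3 : hf p α β B u ≤ (β^2*(u-t0)^2)^((p-2)/2) :=
      Real.rpow_le_rpow_of_nonpos hpos2 (hline u) (by linarith)
    calc hf p α β B u ≤ (β^2*(u-t0)^2)^((p-2)/2) := h3
      _ = (β^2)^((p-2)/2) * ((u-t0)^2)^((p-2)/2) :=
          Real.mul_rpow (sq_nonneg β) (sq_nonneg _)
  have B1 : (∫ u in (0:ℝ)..m, hf p α β B u) ≤ (β^2)^((p-2)/2) * (2/(p-1)) := by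
    rcases le_or_gt t0 0 with h0 | h0
    · have hm_eq : m = 0 := by
        rw [hm_def, max_eq_left h0]
        norm_num
      rw [hm_eq, integral_same]
      positivity
    · have hmt : m ≤ t0 := by
        rw [hm_def, max_eq_right h0.le]; exact min_le_right _ _
      have hrint : IntervalIntegrable (fun u => (t0 - u)^(p-2)) volume 0 m := by
        have h := (intervalIntegrable_rpow' (a := t0 - 0) (b := t0 - m)
          (by linarith : (-1:ℝ) < p-2)).comp_sub_left t0
        simpa using h
      have hcmp : (∫ u in (0:ℝ)..m, hf p α β B u) ≤
          ∫ u in (0:ℝ)..m, (β^2)^((p-2)/2) * (t0-u)^(p-2) := by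
        refine integral_mono_ae_restrict hm0 (h_int hβ hB _ _) (hrint.const_mul _) ?_
        filter_upwards [ae_restrict_mem measurableSet_Icc,
          MeasureTheory.ae_restrict_of_ae hae] with u hu hne
        have hut : u < t0 := lt_of_le_of_ne (le_trans hu.2 hmt) hne
        calc hf p α β B u ≤ (β^2)^((p-2)/2) * ((u-t0)^2)^((p-2)/2) := hcmp_pt u hne
          _ = (β^2)^((p-2)/2) * (t0-u)^(p-2) := by
              rw [show (u-t0)^2 = (t0-u)^2 by ring,
                aux_sq_rpow (t0-u) _ (by linarith), show 2*((p-2)/2) = p-2 by ring]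
      have hval : ∫ u in (0:ℝ)..m, (t0-u)^(p-2) = (t0^(p-1) - (t0-m)^(p-1))/(p-1) := by
        have hcc := integral_comp_sub_left (a := 0) (b := m) (fun x : ℝ => x^(p-2)) t0
        rw [hcc, integral_rpow (Or.inl (by linarith : (-1:ℝ) < p-2))]
        rw [show p-2+1 = p-1 by ring, sub_zero]
      have hb1 : t0^(p-1) ≤ 2 := by
        calc t0^(p-1) ≤ 2^(p-1) := Real.rpow_le_rpow h0.le ht0u (by linarith)
          _ ≤ 2^(1:ℝ) := Real.rpow_le_rpow_of_exponent_le (by norm_num) (by linarith)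
          _ = 2 := Real.rpow_one 2
      have hb2 : 0 ≤ (t0-m)^(p-1) := Real.rpow_nonneg (by linarith) _
      calc (∫ u in (0:ℝ)..m, hf p α β B u)
          ≤ ∫ u in (0:ℝ)..m, (β^2)^((p-2)/2) * (t0-u)^(p-2) := hcmp
        _ = (β^2)^((p-2)/2) * ((t0^(p-1) - (t0-m)^(p-1))/(p-1)) := by
            rw [intervalIntegral.integral_const_mul, hval]
        _ ≤ (β^2)^((p-2)/2) * (2/(p-1)) := by
            apply mul_le_mul_of_nonneg_left _ hbeta
            gcongr
            linarith
  have B2 : (∫ u in m..(1:ℝ), hf p α β B u) ≤ (β^2)^((p-2)/2) * (3/(p-1)) := by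
    rcases le_or_gt 1 t0 with h1t | h1t
    · have hm_eq : m = 1 := by
        rw [hm_def]
        exact min_eq_left (le_trans h1t (le_max_right _ _))
      rw [hm_eq, integral_same]
      positivity
    · have hmt : t0 ≤ m := by
        rw [hm_def]
        exact le_min h1t.le (le_max_right _ _)
      have hrint : IntervalIntegrable (fun u => (u - t0)^(p-2)) volume m 1 := by
        have h := (intervalIntegrable_rpow' (a := m - t0) (b := 1 - t0)
          (by linarith : (-1:ℝ) < p-2)).comp_sub_right t0
        simpa using h
      have hcmp : (∫ u in m..(1:ℝ), hf p α β B u) ≤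
          ∫ u in m..(1:ℝ), (β^2)^((p-2)/2) * (u-t0)^(p-2) := by
        refine integral_mono_ae_restrict hm1 (h_int hβ hB _ _) (hrint.const_mul _) ?_
        filter_upwards [ae_restrict_mem measurableSet_Icc,
          MeasureTheory.ae_restrict_of_ae hae] with u hu hne
        have hut : t0 < u := lt_of_le_of_ne (le_trans hmt hu.1) (Ne.symm hne)
        calc hf p α β B u ≤ (β^2)^((p-2)/2) * ((u-t0)^2)^((p-2)/2) := hcmp_pt u hne
          _ = (β^2)^((p-2)/2) * (u-t0)^(p-2) := by
              rw [aux_sq_rpow (u-t0) _ (by linarith), show 2*((p-2)/2) = p-2 by ring]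
      have hval : ∫ u in m..(1:ℝ), (u-t0)^(p-2) =
          ((1-t0)^(p-1) - (m-t0)^(p-1))/(p-1) := by
        have hcc := integral_comp_sub_right (a := m) (b := 1) (fun x : ℝ => x^(p-2)) t0
        rw [hcc, integral_rpow (Or.inl (by linarith : (-1:ℝ) < p-2))]
        rw [show p-2+1 = p-1 by ring]
      have hb1 : (1-t0)^(p-1) ≤ 3 := by
        calc (1-t0)^(p-1) ≤ 3^(p-1) := Real.rpow_le_rpow (by linarith) (by linarith) (by linarith)
          _ ≤ 3^(1:ℝ) := Real.rpow_le_rpow_of_exponent_le (by norm_num) (by linarith)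
          _ = 3 := Real.rpow_one 3
      have hb2 : 0 ≤ (m-t0)^(p-1) := Real.rpow_nonneg (by linarith) _
      calc (∫ u in m..(1:ℝ), hf p α β B u)
          ≤ ∫ u in m..(1:ℝ), (β^2)^((p-2)/2) * (u-t0)^(p-2) := hcmp
        _ = (β^2)^((p-2)/2) * (((1-t0)^(p-1) - (m-t0)^(p-1))/(p-1)) := by
            rw [intervalIntegral.integral_const_mul, hval]
        _ ≤ (β^2)^((p-2)/2) * (3/(p-1)) := by
            apply mul_le_mul_of_nonneg_left _ hbeta
            gcongr
            linarith
  have hsplit : (∫ u in (0:ℝ)..m, hf p α β B u) + (∫ u in m..(1:ℝ), hf p α β B u)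
      = Hf p α β B 1 :=
    integral_add_adjacent_intervals (h_int hβ hB 0 m) (h_int hβ hB m 1)
  have hbconv : (β^2)^((p-2)/2) = β^(p-2) := by
    rw [aux_sq_rpow β _ hβ.le, show 2*((p-2)/2) = p-2 by ring]
  have hbb : β^(p-2) ≤ ((α+β)/3)^(p-2) :=
    Real.rpow_le_rpow_of_nonpos (by positivity) (by linarith) (by linarith)
  have hdd : ((α+β)/3)^(p-2) = (3:ℝ)^(2-p) * (α+β)^(p-2) := by
    rw [div_rpow_eq _ _ _ hS.le (by norm_num), show -(p-2) = 2-p by ring]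
  have h5 : (0:ℝ) ≤ 5/(p-1) := by positivity
  calc Hf p α β B 1 = (∫ u in (0:ℝ)..m, hf p α β B u)
        + (∫ u in m..(1:ℝ), hf p α β B u) := hsplit.symm
    _ ≤ (β^2)^((p-2)/2) * (5/(p-1)) := by
        have hr : (β^2)^((p-2)/2) * (2/(p-1)) + (β^2)^((p-2)/2) * (3/(p-1))
            = (β^2)^((p-2)/2) * (5/(p-1)) := by ring
        linarith
    _ = β^(p-2) * (5/(p-1)) := by rw [hbconv]
    _ ≤ ((α+β)/3)^(p-2) * (5/(p-1)) := mul_le_mul_of_nonneg_right hbb h5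
    _ = (3:ℝ)^(2-p) * (5/(p-1)) * (α+β)^(p-2) := by rw [hdd]; ring
end EST2

section EST3
variable {p α β B : ℝ} (hp : 1 < p) (hα : 0 < α) (hβ : 0 < β) (hB : B^2 < α^2 * β^2)

include hp hα hβ hB in
lemma E_up : Hf p α β B 1 ≤ max ((3:ℝ)^(2-p) * (1 + 5/(p-1))) 1 * (α+β)^(p-2) := by
  have hS : (0:ℝ) < α + β := by linarith
  have hSr : (0:ℝ) ≤ (α+β)^(p-2) := Real.rpow_nonneg hS.le _
  have hBlow : -(α*β) < B := by nlinarith [sq_nonneg (B + α*β), mul_pos hα hβ]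
  have hBup : B < α*β := by nlinarith [sq_nonneg (B - α*β), mul_pos hα hβ]
  have hp1 : (0:ℝ) < p - 1 := by linarith
  rcases le_total 2 p with h2 | h2
  · -- p ≥ 2 : pointwise bound by (α+β)^(p-2)
    have hpt : ∀ u ∈ Icc (0:ℝ) 1, hf p α β B u ≤ (α+β)^(p-2) := by
      intro u hu
      have hb : β*u ≤ β*1 := mul_le_mul_of_nonneg_left hu.2 hβ.le
      have h1 : α + β*u ≤ α+β := by linarith
      have h2' : (α + β*u)^2 ≤ (α+β)^2 :=
        pow_le_pow_left₀ (by nlinarith [mul_nonneg hβ.le hu.1]) h1 2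
      have h3 : qf α β B u ≤ (α + β*u)^2 := by
        unfold qf
        nlinarith [mul_nonneg hu.1 (by linarith : (0:ℝ) ≤ α*β - B)]
      have h4 : qf α β B u ^ ((p-2)/2) ≤ ((α+β)^2)^((p-2)/2) :=
        Real.rpow_le_rpow (q_pos hβ hB u).le (le_trans h3 h2') (by linarith)
      calc hf p α β B u ≤ ((α+β)^2)^((p-2)/2) := h4
        _ = (α+β)^(p-2) := by
            rw [aux_sq_rpow _ _ hS.le, show 2*((p-2)/2) = p-2 by ring]
    have hint : Hf p α β B 1 ≤ ∫ u in (0:ℝ)..1, (α+β)^(p-2) :=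
      integral_mono_on (by norm_num) (h_int hβ hB _ _) intervalIntegrable_const hpt
    rw [intervalIntegral.integral_const, smul_eq_mul] at hint
    calc Hf p α β B 1 ≤ (1-0) * (α+β)^(p-2) := hint
      _ = 1 * (α+β)^(p-2) := by ring
      _ ≤ max ((3:ℝ)^(2-p) * (1 + 5/(p-1))) 1 * (α+β)^(p-2) :=
          mul_le_mul_of_nonneg_right (le_max_right _ _) hSr
  · have hmax : (3:ℝ)^(2-p) * (1 + 5/(p-1)) ≤ max ((3:ℝ)^(2-p) * (1 + 5/(p-1))) 1 :=
      le_max_left _ _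
    have h3p : (0:ℝ) < (3:ℝ)^(2-p) := Real.rpow_pos_of_pos (by norm_num) _
    rcases le_total α (2*β) with hc | hc
    · -- line case
      have h1 := E_up_line hp hα hβ hB h2 hc
      calc Hf p α β B 1 ≤ (3:ℝ)^(2-p) * (5/(p-1)) * (α+β)^(p-2) := h1
        _ ≤ (3:ℝ)^(2-p) * (1 + 5/(p-1)) * (α+β)^(p-2) := by
            apply mul_le_mul_of_nonneg_right _ hSr
            have : (0:ℝ) < 5/(p-1) := by positivity
            nlinarith
        _ ≤ max ((3:ℝ)^(2-p) * (1 + 5/(p-1))) 1 * (α+β)^(p-2) :=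
            mul_le_mul_of_nonneg_right hmax hSr
    · -- α ≥ 2β : q bounded below
      have hpt : ∀ u ∈ Icc (0:ℝ) 1, hf p α β B u ≤ (((α+β)/3)^2)^((p-2)/2) := by
        intro u hu
        have hb : β*u ≤ β*1 := mul_le_mul_of_nonneg_left hu.2 hβ.le
        have h1 : (α+β)/3 ≤ α - β*u := by linarith
        have h2' : ((α+β)/3)^2 ≤ (α - β*u)^2 := pow_le_pow_left₀ (by positivity) h1 2
        have h3 : (α - β*u)^2 ≤ qf α β B u := by
          unfold qf
          nlinarith [mul_nonneg hu.1 (by linarith : (0:ℝ) ≤ B + α*β)]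
        exact Real.rpow_le_rpow_of_nonpos (by positivity) (le_trans h2' h3) (by linarith)
      have hint : Hf p α β B 1 ≤ ∫ u in (0:ℝ)..1, (((α+β)/3)^2)^((p-2)/2) :=
        integral_mono_on (by norm_num) (h_int hβ hB _ _) intervalIntegrable_const hpt
      rw [intervalIntegral.integral_const, smul_eq_mul] at hint
      have hdd : (((α+β)/3)^2)^((p-2)/2) = (3:ℝ)^(2-p) * (α+β)^(p-2) := by
        rw [aux_sq_rpow _ _ (by positivity), show 2*((p-2)/2) = p-2 by ring,
          div_rpow_eq _ _ _ hS.le (by norm_num), show -(p-2) = 2-p by ring]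
      calc Hf p α β B 1 ≤ (1-0) * (((α+β)/3)^2)^((p-2)/2) := hint
        _ = (3:ℝ)^(2-p) * (α+β)^(p-2) := by rw [hdd]; ring
        _ ≤ (3:ℝ)^(2-p) * (1 + 5/(p-1)) * (α+β)^(p-2) := by
            apply mul_le_mul_of_nonneg_right _ hSr
            have : (0:ℝ) < 5/(p-1) := by positivity
            nlinarith
        _ ≤ max ((3:ℝ)^(2-p) * (1 + 5/(p-1))) 1 * (α+β)^(p-2) :=
            mul_le_mul_of_nonneg_right hmax hSr
end EST3

noncomputable def clow (p : ℝ) : ℝ := kap1 p / 2 * min (1/8 * (10:ℝ)^(2-p)) (1/2)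
noncomputable def cup (p : ℝ) : ℝ := kap2 p * max ((3:ℝ)^(2-p) * (1 + 5/(p-1))) 1

lemma clow_pos {p : ℝ} (hp : 1 < p) : 0 < clow p := by
  have h1 := kap1_posx hp
  have h2 : (0:ℝ) < (10:ℝ)^(2-p) := Real.rpow_pos_of_pos (by norm_num) _
  have : (0:ℝ) < min (1/8 * (10:ℝ)^(2-p)) (1/2) := lt_min (by positivity) (by norm_num)
  unfold clow; positivity

lemma cup_pos {p : ℝ} (hp : 1 < p) : 0 < cup p := by
  have h1 := kap2_posx hp
  have : (0:ℝ) < max ((3:ℝ)^(2-p) * (1 + 5/(p-1))) 1 :=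
    lt_of_lt_of_le one_pos (le_max_right _ _)
  unfold cup; positivity

lemma core_strict {p α β B : ℝ} (hp : 1 < p) (hα : 0 < α) (hβ : 0 < β)
    (hB : B^2 < α^2 * β^2) :
    clow p * (β^2 * (α+β)^(p-2)) ≤
      (α^2 + 2*B + β^2)^(p/2) - (α^2)^(p/2) - p * (α^2)^((p-2)/2) * B ∧
    (α^2 + 2*B + β^2)^(p/2) - (α^2)^(p/2) - p * (α^2)^((p-2)/2) * B ≤
      cup p * (β^2 * (α+β)^(p-2)) := by
  obtain ⟨h1, h2⟩ := main_bounds hp hβ hB (α := α)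
  have e1 : ff p α β B 1 = (α^2 + 2*B + β^2)^(p/2) := by unfold ff qf; norm_num
  have e0 : ff p α β B 0 = (α^2)^(p/2) := by unfold ff qf; norm_num
  have ef : f1 p α β B 0 = p * (α^2)^((p-2)/2) * B := by unfold f1 qf Lf; norm_num
  rw [e1, e0, ef] at h1 h2
  have hk1 := kap1_posx hp
  have hk2 := kap2_posx hp
  constructor
  · have hm := mul_le_mul_of_nonneg_left (E_low hp hα hβ hB)
      (show (0:ℝ) ≤ kap1 p * β^2 * (1/2) by positivity)
    calc clow p * (β^2 * (α+β)^(p-2))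
        = kap1 p * β^2 * (1/2) * (min (1/8 * (10:ℝ)^(2-p)) (1/2) * (α+β)^(p-2)) := by
          unfold clow; ring
      _ ≤ kap1 p * β^2 * (1/2) * Hf p α β B (1/2) := hm
      _ = kap1 p * β^2 * (1/2 * Hf p α β B (1/2)) := by ring
      _ ≤ _ := h1
  · have hm := mul_le_mul_of_nonneg_left (E_up hp hα hβ hB)
      (show (0:ℝ) ≤ kap2 p * β^2 by positivity)
    calc (α^2 + 2*B + β^2)^(p/2) - (α^2)^(p/2) - p * (α^2)^((p-2)/2) * B
        ≤ kap2 p * β^2 * Hf p α β B 1 := h2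
      _ ≤ kap2 p * β^2 * (max ((3:ℝ)^(2-p) * (1 + 5/(p-1))) 1 * (α+β)^(p-2)) := hm
      _ = cup p * (β^2 * (α+β)^(p-2)) := by unfold cup; ring

lemma core_final {p : ℝ} (hp : 1 < p) (α β B : ℝ) (hα : 0 ≤ α) (hβ : 0 ≤ β)
    (hB : B^2 ≤ α^2 * β^2) :
    clow p * (β^2 * (α+β)^(p-2)) ≤
      (α^2 + 2*B + β^2)^(p/2) - (α^2)^(p/2) - p * (α^2)^((p-2)/2) * B ∧
    (α^2 + 2*B + β^2)^(p/2) - (α^2)^(p/2) - p * (α^2)^((p-2)/2) * B ≤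
      cup p * (β^2 * (α+β)^(p-2)) := by
  rcases eq_or_lt_of_le hβ with h0 | h0
  · -- β = 0, hence B = 0
    have hβ0 : β = 0 := h0.symm
    have hB0 : B = 0 := by
      have : B^2 ≤ 0 := by rw [hβ0] at hB; simpa using hB
      have h2 : B^2 = 0 := le_antisymm this (sq_nonneg B)
      exact pow_eq_zero_iff (n := 2) (by norm_num) |>.1 h2
    subst hβ0; subst hB0
    norm_num
  · -- β > 0 : limit argument
    set l := nhdsWithin (α^2) (Ioi (α^2)) with hl
    have hstrict : ∀ A ∈ Ioi (α^2),
        clow p * (β^2 * (Real.sqrt A + β)^(p-2)) ≤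
          (A + 2*B + β^2)^(p/2) - A^(p/2) - p * A^((p-2)/2) * B ∧
        (A + 2*B + β^2)^(p/2) - A^(p/2) - p * A^((p-2)/2) * B ≤
          cup p * (β^2 * (Real.sqrt A + β)^(p-2)) := by
      intro A hA
      have hApos : 0 < A := lt_of_le_of_lt (by positivity) hA
      have hsq : Real.sqrt A ^ 2 = A := Real.sq_sqrt hApos.le
      have hsp : 0 < Real.sqrt A := Real.sqrt_pos.2 hApos
      have hB' : B^2 < Real.sqrt A ^ 2 * β^2 := by
        rw [hsq]
        calc B^2 ≤ α^2*β^2 := hB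
          _ < A * β^2 := by
            apply mul_lt_mul_of_pos_right hA (by positivity)
      have h := core_strict hp hsp h0 hB'
      rw [hsq] at h
      exact h
    -- tendsto of all pieces
    have hmono : l ≤ nhds (α^2) := nhdsWithin_le_nhds
    have T1 : Filter.Tendsto (fun A : ℝ => (A + 2*B + β^2)^(p/2)) l
        (nhds ((α^2 + 2*B + β^2)^(p/2))) := by
      have hbase : (0:ℝ) ≤ α^2 + 2*B + β^2 := by
        nlinarith [sq_nonneg (α - β), sq_nonneg (B + α*β), sq_nonneg (α+β)]
      have hc : ContinuousAt (fun x : ℝ => x^(p/2)) (α^2 + 2*B + β^2) := by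
        rcases eq_or_lt_of_le hbase with hb0 | hb0
        · rw [← hb0]
          exact Real.continuousAt_rpow_const 0 (p/2) (Or.inr (by linarith))
        · exact Real.continuousAt_rpow_const _ _ (Or.inl hb0.ne')
      exact hc.tendsto.comp
        ((((Filter.tendsto_id (α := ℝ) (x := nhds (α^2))).mono_left hmono).add_const (2*B)).add_const (β^2))
    have T2 : Filter.Tendsto (fun A : ℝ => A^(p/2)) l (nhds ((α^2)^(p/2))) := by
      have hc : ContinuousAt (fun x : ℝ => x^(p/2)) (α^2) := by
        rcases eq_or_lt_of_le (sq_nonneg α) with hb0 | hb0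
        · rw [← hb0]
          exact Real.continuousAt_rpow_const 0 (p/2) (Or.inr (by linarith))
        · exact Real.continuousAt_rpow_const _ _ (Or.inl hb0.ne')
      exact hc.tendsto.mono_left hmono
    have T3 : Filter.Tendsto (fun A : ℝ => p * A^((p-2)/2) * B) l
        (nhds (p * (α^2)^((p-2)/2) * B)) := by
      rcases eq_or_ne B 0 with hB0 | hB0
      · simp only [hB0, mul_zero]
        exact tendsto_const_nhds
      · have hα2 : 0 < α^2 := by
          rcases eq_or_lt_of_le (sq_nonneg α) with hb0 | hb0
          · exfalso
            apply hB0
            have : B^2 ≤ 0 := by rw [← hb0] at hB; nlinarith [sq_nonneg β]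
            have h2 : B^2 = 0 := le_antisymm this (sq_nonneg B)
            exact pow_eq_zero_iff (n := 2) (by norm_num) |>.1 h2
          · exact hb0
        have hc : ContinuousAt (fun x : ℝ => x^((p-2)/2)) (α^2) :=
          Real.continuousAt_rpow_const _ _ (Or.inl hα2.ne')
        exact ((hc.tendsto.mono_left hmono).const_mul p).mul_const B
    have T5 : Filter.Tendsto (fun A : ℝ => Real.sqrt A + β) l (nhds (α + β)) := by
      have : Filter.Tendsto (fun A : ℝ => Real.sqrt A) l (nhds α) := by
        have := (Real.continuous_sqrt.tendsto (α^2)).mono_left hmono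
        rwa [Real.sqrt_sq hα] at this
      exact this.add tendsto_const_nhds
    have hSpos : (0:ℝ) < α + β := by linarith
    have T6 : Filter.Tendsto (fun A : ℝ => (Real.sqrt A + β)^(p-2)) l
        (nhds ((α+β)^(p-2))) :=
      (Real.continuousAt_rpow_const _ _ (Or.inl hSpos.ne')).tendsto.comp T5
    have Tlhs : Filter.Tendsto (fun A : ℝ => clow p * (β^2 * (Real.sqrt A + β)^(p-2))) l
        (nhds (clow p * (β^2 * (α+β)^(p-2)))) :=
      ((T6.const_mul (β^2)).const_mul (clow p))
    have Tmid : Filter.Tendsto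
        (fun A : ℝ => (A + 2*B + β^2)^(p/2) - A^(p/2) - p * A^((p-2)/2) * B) l
        (nhds ((α^2 + 2*B + β^2)^(p/2) - (α^2)^(p/2) - p * (α^2)^((p-2)/2) * B)) :=
      (T1.sub T2).sub T3
    have Trhs : Filter.Tendsto (fun A : ℝ => cup p * (β^2 * (Real.sqrt A + β)^(p-2))) l
        (nhds (cup p * (β^2 * (α+β)^(p-2)))) :=
      ((T6.const_mul (β^2)).const_mul (cup p))
    have hne : l.NeBot := by rw [hl]; infer_instance
    constructor
    · refine le_of_tendsto_of_tendsto Tlhs Tmid ?_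
      filter_upwards [self_mem_nhdsWithin] with A hA using (hstrict A hA).1
    · refine le_of_tendsto_of_tendsto Tmid Trhs ?_
      filter_upwards [self_mem_nhdsWithin] with A hA using (hstrict A hA).2

theorem stmt_5 (p : ℝ) (hp₁ : 1 < p) (d : ℕ) (hd : 1 ≤ d) :
    ∃ C : ℝ, 1 ≤ C ∧ ∀ a b : EuclideanSpace ℝ (Fin d),
      C⁻¹ * (‖b‖ ^ 2 * (‖a‖ + ‖b‖) ^ (p - 2)) ≤
          ‖a + b‖ ^ p - ‖a‖ ^ p - p * ‖a‖ ^ (p - 2) * ⟪a, b⟫ ∧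
        ‖a + b‖ ^ p - ‖a‖ ^ p - p * ‖a‖ ^ (p - 2) * ⟪a, b⟫ ≤
          C * (‖b‖ ^ 2 * (‖a‖ + ‖b‖) ^ (p - 2)) := by
  refine ⟨max (max (cup p) (clow p)⁻¹) 1, le_max_right _ _, ?_⟩
  intro a b
  have hα : (0:ℝ) ≤ ‖a‖ := norm_nonneg a
  have hβ : (0:ℝ) ≤ ‖b‖ := norm_nonneg b
  have hCS : ⟪a, b⟫^2 ≤ ‖a‖^2 * ‖b‖^2 := by
    have h := real_inner_mul_inner_self_le a b
    rw [real_inner_self_eq_norm_sq, real_inner_self_eq_norm_sq] at h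
    nlinarith [h]
  obtain ⟨h1, h2⟩ := core_final hp₁ ‖a‖ ‖b‖ ⟪a, b⟫ hα hβ hCS
  have e1 : (‖a‖^2 + 2*⟪a, b⟫ + ‖b‖^2)^(p/2) = ‖a+b‖^p := by
    rw [← norm_add_sq_real, aux_sq_rpow _ _ (norm_nonneg _), show 2*(p/2) = p by ring]
  have e2 : (‖a‖^2)^(p/2) = ‖a‖^p := by
    rw [aux_sq_rpow _ _ (norm_nonneg _), show 2*(p/2) = p by ring]
  have e3 : (‖a‖^2)^((p-2)/2) = ‖a‖^(p-2) := by
    rw [aux_sq_rpow _ _ (norm_nonneg _), show 2*((p-2)/2) = p-2 by ring]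
  rw [e1, e2, e3] at h1 h2
  have hG : (0:ℝ) ≤ ‖b‖^2 * (‖a‖+‖b‖)^(p-2) := by positivity
  constructor
  · refine le_trans ?_ h1
    apply mul_le_mul_of_nonneg_right _ hG
    have hclow := clow_pos hp₁
    have hinvle : (clow p)⁻¹ ≤ max (max (cup p) (clow p)⁻¹) 1 :=
      le_trans (le_max_right _ _) (le_max_left _ _)
    calc (max (max (cup p) (clow p)⁻¹) 1)⁻¹ ≤ ((clow p)⁻¹)⁻¹ :=
          inv_anti₀ (inv_pos.2 hclow) hinvle
      _ = clow p := inv_inv _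
  · exact le_trans h2 (mul_le_mul_of_nonneg_right
      (le_trans (le_max_left _ _) (le_max_left _ 1)) hG)
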